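/- Let $Q$ be a homogeneous polynomial of degree $r$ in $N$ variables over $\mathbb{C}$, let $a, b \in \mathbb{C}^N$, and let $y_a, y_b$ be natural numbers such that $Q$ vanishes with multiplicity at least $y_a$ at $a$ and with multiplicity at least $y_b$ at $b$. Then for all scalars $s, t \in \mathbb{C}$, the polynomial $Q$ vanishes with multiplicity at least $y_a + y_b - r$ at the point $s\,a + t\,b$; that is, $Q$ vanishes with multiplicity at least $y_a + y_b - r$ at every point of the line spanned by $a$ and $b$. -/

import Mathlib

open MvPolynomial Polynomial

namespace Stmt5Aux

variable {N : ℕ}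

/-- Eval of a homogeneous polynomial at a scaled point. -/
lemma eval_smul_of_isHomogeneous {φ : MvPolynomial (Fin N) ℂ} {n : ℕ}
    (h : φ.IsHomogeneous n) (c : ℂ) (x : Fin N → ℂ) :
    MvPolynomial.eval (c • x) φ = c ^ n * MvPolynomial.eval x φ := by
  rw [MvPolynomial.eval_eq, MvPolynomial.eval_eq, Finset.mul_sum]
  refine Finset.sum_congr rfl fun d hd => ?_
  have hc : MvPolynomial.coeff d φ ≠ 0 := MvPolynomial.mem_support_iff.mp hd
  have hdeg : d.degree = n := by
    have := h hc
    rw [Finsupp.degree_eq_weight_one]; exact this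
  have : ∏ i ∈ d.support, (c • x) i ^ d i
      = c ^ n * ∏ i ∈ d.support, x i ^ d i := by
    simp only [Pi.smul_apply, smul_eq_mul, mul_pow]
    rw [Finset.prod_mul_distrib, Finset.prod_pow_eq_pow_sum]
    congr 1
    rw [← hdeg]; rfl
  rw [this]; ring

lemma isHomogeneous_pderiv {φ : MvPolynomial (Fin N) ℂ} {n : ℕ}
    (h : φ.IsHomogeneous n) (i : Fin N) :
    (MvPolynomial.pderiv i φ).IsHomogeneous (n - 1) := by
  conv_lhs => rw [φ.as_sum]
  rw [map_sum]
  apply MvPolynomial.IsHomogeneous.sum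
  intro d hd
  rw [MvPolynomial.pderiv_monomial]
  rcases Nat.eq_zero_or_pos (d i) with h0 | h1
  · rw [h0]
    simp only [Nat.cast_zero, mul_zero, MvPolynomial.monomial_zero]
    exact MvPolynomial.isHomogeneous_zero _ _ _
  · apply MvPolynomial.isHomogeneous_monomial
    have hc : MvPolynomial.coeff d φ ≠ 0 := MvPolynomial.mem_support_iff.mp hd
    have hdeg : d.degree = n := by
      have := h hc
      rw [Finsupp.degree_eq_weight_one]; exact this
    have hle : Finsupp.single i 1 ≤ d := by
      rw [Finsupp.single_le_iff]; exact h1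
    have hadd : (d - Finsupp.single i 1) + Finsupp.single i 1 = d :=
      tsub_add_cancel_of_le hle
    have hdegadd : (d - Finsupp.single i 1).degree + (Finsupp.single i 1).degree = n := by
      rw [← hdeg, ← hadd]
      simp [Finsupp.degree_eq_weight_one, ← map_add, hadd]
    have hs1 : (Finsupp.single i (1:ℕ)).degree = 1 := by
      rw [Finsupp.degree_single]
    omega

lemma isHomogeneous_foldr {Q : MvPolynomial (Fin N) ℂ} {r : ℕ}
    (hQ : Q.IsHomogeneous r) (L : List (Fin N)) :
    (L.foldr (fun i q => MvPolynomial.pderiv i q) Q).IsHomogeneous (r - L.length) := by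
  induction L with
  | nil => simpa using hQ
  | cons i L ih =>
      simp only [List.foldr_cons, List.length_cons]
      have h2 := isHomogeneous_pderiv ih i
      have : r - (L.length + 1) = r - L.length - 1 := by omega
      rwa [this]

lemma pderiv_eq_zero_of_isHomogeneous_zero {φ : MvPolynomial (Fin N) ℂ}
    (h : φ.IsHomogeneous 0) (i : Fin N) : MvPolynomial.pderiv i φ = 0 := by
  have ht : φ.totalDegree = 0 := by
    rw [MvPolynomial.totalDegree_zero_iff_isHomogeneous]; exact h
  rw [MvPolynomial.totalDegree_eq_zero_iff] at ht
  conv_lhs => rw [φ.as_sum]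
  rw [map_sum]
  apply Finset.sum_eq_zero
  intro d hd
  rw [MvPolynomial.pderiv_monomial, ht d hd i]
  simp

lemma polyEval_aeval (f : Fin N → Polynomial ℂ) (u : ℂ) (φ : MvPolynomial (Fin N) ℂ) :
    Polynomial.eval u (MvPolynomial.aeval f φ) =
      MvPolynomial.eval (fun i => Polynomial.eval u (f i)) φ := by
  induction φ using MvPolynomial.induction_on with
  | C c => simp
  | add p q hp hq => simp [hp, hq]
  | mul_X p i hp => simp [hp]

lemma natDegree_aeval_le (f : Fin N → Polynomial ℂ) (hf : ∀ i, (f i).natDegree ≤ 1)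
    {φ : MvPolynomial (Fin N) ℂ} {n : ℕ} (hφ : φ.totalDegree ≤ n) :
    (MvPolynomial.aeval f φ).natDegree ≤ n := by
  rw [MvPolynomial.aeval_def, MvPolynomial.eval₂_eq]
  apply Polynomial.natDegree_sum_le_of_forall_le
  intro d hd
  calc (algebraMap ℂ (Polynomial ℂ) (MvPolynomial.coeff d φ) *
          ∏ i ∈ d.support, f i ^ d i).natDegree
      ≤ (algebraMap ℂ (Polynomial ℂ) (MvPolynomial.coeff d φ)).natDegree +
          (∏ i ∈ d.support, f i ^ d i).natDegree := Polynomial.natDegree_mul_le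
    _ ≤ 0 + ∑ i ∈ d.support, (f i ^ d i).natDegree := by
        gcongr
        · exact le_of_eq (Polynomial.natDegree_C _)
        · exact Polynomial.natDegree_prod_le _ _
    _ ≤ ∑ i ∈ d.support, d i * 1 := by
        rw [zero_add]
        apply Finset.sum_le_sum
        intro i _
        exact (Polynomial.natDegree_pow_le).trans (Nat.mul_le_mul le_rfl (hf i))
    _ ≤ n := by
        simp only [mul_one]
        exact le_trans (MvPolynomial.le_totalDegree hd) hφ

/-- Chain rule: derivative of the restriction of `φ` to the line `u ↦ a + u b`. -/
lemma derivative_aeval_line (a b : Fin N → ℂ) (φ : MvPolynomial (Fin N) ℂ) :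
    Polynomial.derivative
        (MvPolynomial.aeval (fun i => Polynomial.C (a i) + Polynomial.C (b i) * Polynomial.X) φ)
      = ∑ i : Fin N, Polynomial.C (b i) *
          MvPolynomial.aeval (fun i => Polynomial.C (a i) + Polynomial.C (b i) * Polynomial.X)
            (MvPolynomial.pderiv i φ) := by
  set f : Fin N → Polynomial ℂ :=
    fun i => Polynomial.C (a i) + Polynomial.C (b i) * Polynomial.X with hf
  induction φ using MvPolynomial.induction_on with
  | C c => simp
  | add p q hp hq =>
      simp only [map_add, hp, hq, mul_add, Finset.sum_add_distrib]
  | mul_X p j hp =>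
      classical
      have hderiv : Polynomial.derivative (f j) = Polynomial.C (b j) := by simp [hf]
      have hpd : ∀ i : Fin N, MvPolynomial.pderiv i (p * MvPolynomial.X j)
          = MvPolynomial.pderiv i p * MvPolynomial.X j
            + (if j = i then p else 0) := by
        intro i
        rw [MvPolynomial.pderiv_mul]
        congr 1
        rcases eq_or_ne j i with rfl | h
        · simp
        · simp [MvPolynomial.pderiv_X_of_ne h, h]
      have hrhs : ∀ i ∈ (Finset.univ : Finset (Fin N)),
          Polynomial.C (b i) * MvPolynomial.aeval f (MvPolynomial.pderiv i (p * MvPolynomial.X j))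
          = Polynomial.C (b i) * MvPolynomial.aeval f (MvPolynomial.pderiv i p) * f j
            + (if j = i then Polynomial.C (b i) * MvPolynomial.aeval f p else 0) := by
        intro i _
        rw [hpd i, map_add, map_mul, MvPolynomial.aeval_X]
        rcases eq_or_ne j i with rfl | h
        · simp only [if_pos rfl]
          ring_nf
          simp only [if_true]
        · simp only [if_neg h, map_zero, add_zero, mul_zero]
          ring
      rw [map_mul, MvPolynomial.aeval_X, Polynomial.derivative_mul, hp, hderiv,
        Finset.sum_congr rfl hrhs, Finset.sum_add_distrib, ← Finset.sum_mul,
        Finset.sum_ite_eq]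
      simp [mul_comm]

/-- If all iterated partial derivatives of order `j` of `S` vanish at `a`, then the
`j`-th derivative of the restriction of `S` to the line `u ↦ a + u b` vanishes at `0`. -/
lemma iterate_derivative_eval_zero (a b : Fin N → ℂ) :
    ∀ (j : ℕ) (S : MvPolynomial (Fin N) ℂ),
      (∀ L : List (Fin N), L.length = j →
        MvPolynomial.eval a (L.foldr (fun i q => MvPolynomial.pderiv i q) S) = 0) →
      Polynomial.eval 0 (Polynomial.derivative^[j]
        (MvPolynomial.aeval
          (fun i => Polynomial.C (a i) + Polynomial.C (b i) * Polynomial.X) S)) = 0 := by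
  intro j
  induction j with
  | zero =>
      intro S hS
      rw [Function.iterate_zero_apply, polyEval_aeval]
      have := hS [] rfl
      simpa using this
  | succ j ih =>
      intro S hS
      rw [Function.iterate_succ_apply, derivative_aeval_line a b S]
      rw [Polynomial.iterate_derivative_sum, Polynomial.eval_finset_sum]
      apply Finset.sum_eq_zero
      intro i _
      rw [Polynomial.iterate_derivative_C_mul, Polynomial.eval_mul, Polynomial.eval_C]
      rw [ih (MvPolynomial.pderiv i S) ?_, mul_zero]
      intro L hL
      have h2 := hS (L ++ [i]) (by simp [hL])
      rwa [List.foldr_append] at h2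

lemma coeff_of_eval_iterate (q : Polynomial ℂ) (j : ℕ)
    (h : Polynomial.eval 0 (Polynomial.derivative^[j] q) = 0) : q.coeff j = 0 := by
  rw [← Polynomial.coeff_zero_eq_eval_zero, Polynomial.coeff_iterate_derivative] at h
  simp only [zero_add, Nat.descFactorial_self, nsmul_eq_mul] at h
  have hj : ((j.factorial : ℂ)) ≠ 0 := by
    exact_mod_cast Nat.factorial_ne_zero j
  exact (mul_eq_zero.mp h).resolve_left hj

lemma coeff_reflect (d : ℕ) (c : ℕ → ℂ) (j : ℕ) :
    (∑ i ∈ Finset.range (d+1), Polynomial.C (c i) * Polynomial.X ^ (d - i)).coeff j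
      = if j ≤ d then c (d - j) else 0 := by
  rw [Polynomial.finset_sum_coeff]
  simp only [Polynomial.coeff_C_mul, Polynomial.coeff_X_pow]
  by_cases hj : j ≤ d
  · rw [if_pos hj, Finset.sum_eq_single (d - j)]
    · rw [if_pos (by omega), mul_one]
    · intro i hi hne
      rw [Finset.mem_range] at hi
      rw [if_neg (by omega), mul_zero]
    · intro h
      exact absurd (Finset.mem_range.mpr (by omega)) h
  · rw [if_neg hj]
    apply Finset.sum_eq_zero
    intro i hi
    rw [Finset.mem_range] at hi
    rw [if_neg (by omega), mul_zero]

lemma reversal (p q : Polynomial ℂ) (d : ℕ) (hp : p.natDegree ≤ d)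
    (h : ∀ u : ℂ, u ≠ 0 → q.eval u = u ^ d * p.eval u⁻¹) :
    q = ∑ i ∈ Finset.range (d+1), Polynomial.C (p.coeff i) * Polynomial.X ^ (d - i) := by
  have hE : q - ∑ i ∈ Finset.range (d+1), Polynomial.C (p.coeff i) * Polynomial.X ^ (d - i)
      = 0 := by
    apply Polynomial.eq_zero_of_infinite_isRoot
    have hinf : ({(0:ℂ)}ᶜ : Set ℂ).Infinite :=
      Set.Finite.infinite_compl (Set.finite_singleton 0)
    apply hinf.mono
    intro u hu
    have hu0 : u ≠ 0 := hu
    have hsum : u ^ d * Polynomial.eval u⁻¹ p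
        = ∑ i ∈ Finset.range (d+1), p.coeff i * u ^ (d - i) := by
      rw [Polynomial.eval_eq_sum_range' (Nat.lt_succ_of_le hp), Finset.mul_sum]
      refine Finset.sum_congr rfl fun i hi => ?_
      rw [Finset.mem_range] at hi
      have hpow : u ^ (d - i) = u ^ d * (u⁻¹) ^ i := by
        rw [inv_pow, pow_sub₀ u hu0 (by omega)]
      rw [hpow]; ring
    simp only [Set.mem_setOf_eq, Polynomial.IsRoot, Polynomial.eval_sub,
      Polynomial.eval_finset_sum, Polynomial.eval_mul, Polynomial.eval_C,
      Polynomial.eval_pow, Polynomial.eval_X]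
    rw [h u hu0, hsum, sub_self]
  exact sub_eq_zero.mp hE

/-- The key lemma: a homogeneous polynomial of degree `d` vanishing to order `α` at `a`
and order `β` at `b`, with `d < α + β`, vanishes at every point of the line through
`a` and `b`. -/
lemma key {d α β : ℕ} (R : MvPolynomial (Fin N) ℂ) (hR : R.IsHomogeneous d)
    (a b : Fin N → ℂ)
    (hA : ∀ L : List (Fin N), L.length < α →
      MvPolynomial.eval a (L.foldr (fun i q => MvPolynomial.pderiv i q) R) = 0)
    (hB : ∀ L : List (Fin N), L.length < β →
      MvPolynomial.eval b (L.foldr (fun i q => MvPolynomial.pderiv i q) R) = 0)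
    (hd : d < α + β) (s t : ℂ) :
    MvPolynomial.eval (s • a + t • b) R = 0 := by
  set f : Fin N → Polynomial ℂ :=
    fun i => Polynomial.C (a i) + Polynomial.C (b i) * Polynomial.X with hf
  set g : Fin N → Polynomial ℂ :=
    fun i => Polynomial.C (b i) + Polynomial.C (a i) * Polynomial.X with hg
  set q : Polynomial ℂ := MvPolynomial.aeval f R with hq
  set p : Polynomial ℂ := MvPolynomial.aeval g R with hp
  have hevq : ∀ u : ℂ, q.eval u = MvPolynomial.eval (fun i => a i + u * b i) R := by
    intro u
    rw [hq, polyEval_aeval]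
    have hfn : (fun i => Polynomial.eval u (f i)) = fun i => a i + u * b i := by
      funext i
      simp only [hf, Polynomial.eval_add, Polynomial.eval_C, Polynomial.eval_mul,
        Polynomial.eval_X]
      ring
    rw [hfn]
  have hevp : ∀ u : ℂ, p.eval u = MvPolynomial.eval (fun i => b i + u * a i) R := by
    intro u
    rw [hp, polyEval_aeval]
    have hgn : (fun i => Polynomial.eval u (g i)) = fun i => b i + u * a i := by
      funext i
      simp only [hg, Polynomial.eval_add, Polynomial.eval_C, Polynomial.eval_mul,
        Polynomial.eval_X]
      ring
    rw [hgn]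
  -- low coefficients of q vanish
  have hqlow : ∀ j, j < α → q.coeff j = 0 := by
    intro j hj
    apply coeff_of_eval_iterate
    exact iterate_derivative_eval_zero a b j R (fun L hL => hA L (by omega))
  have hplow : ∀ j, j < β → p.coeff j = 0 := by
    intro j hj
    apply coeff_of_eval_iterate
    exact iterate_derivative_eval_zero b a j R (fun L hL => hB L (by omega))
  have hdeg1 : ∀ i, (f i).natDegree ≤ 1 := by
    intro i
    apply le_trans (Polynomial.natDegree_add_le _ _)
    simp [Polynomial.natDegree_C_mul_le]
    exact Polynomial.natDegree_C_mul_le _ _ |>.trans (by simp)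
  have hdeg2 : ∀ i, (g i).natDegree ≤ 1 := by
    intro i
    apply le_trans (Polynomial.natDegree_add_le _ _)
    simp [Polynomial.natDegree_C_mul_le]
    exact Polynomial.natDegree_C_mul_le _ _ |>.trans (by simp)
  have hqdeg : q.natDegree ≤ d := natDegree_aeval_le f hdeg1 hR.totalDegree_le
  have hpdeg : p.natDegree ≤ d := natDegree_aeval_le g hdeg2 hR.totalDegree_le
  -- the reversal identity
  have hrev : ∀ u : ℂ, u ≠ 0 → q.eval u = u ^ d * p.eval u⁻¹ := by
    intro u hu
    rw [hevq, hevp]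
    have hpt : (fun i => a i + u * b i) = u • (fun i => b i + u⁻¹ * a i) := by
      funext i
      simp only [Pi.smul_apply, smul_eq_mul]
      field_simp
      ring
    rw [hpt, eval_smul_of_isHomogeneous hR]
  have hqrep := reversal p q d hpdeg hrev
  -- q is identically zero
  have hq0 : q = 0 := by
    ext j
    rw [Polynomial.coeff_zero]
    by_cases hj : j < α
    · exact hqlow j hj
    · rw [hqrep, coeff_reflect]
      by_cases hjd : j ≤ d
      · rw [if_pos hjd]
        exact hplow (d - j) (by omega)
      · rw [if_neg hjd]
  -- p is identically zero
  have hp0 : p = 0 := by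
    apply Polynomial.eq_zero_of_infinite_isRoot
    have hinf : ({(0:ℂ)}ᶜ : Set ℂ).Infinite :=
      Set.Finite.infinite_compl (Set.finite_singleton 0)
    apply hinf.mono
    intro u hu
    have hu0 : u ≠ 0 := hu
    have hrevp : p.eval u = u ^ d * q.eval u⁻¹ := by
      rw [hevq, hevp]
      have hpt : (fun i => b i + u * a i) = u • (fun i => a i + u⁻¹ * b i) := by
        funext i
        simp only [Pi.smul_apply, smul_eq_mul]
        field_simp
        ring
      rw [hpt, eval_smul_of_isHomogeneous hR]
    simp only [Set.mem_setOf_eq, Polynomial.IsRoot]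
    rw [hrevp, hq0]
    simp
  -- conclude
  by_cases hs : s = 0
  · by_cases ht : t = 0
    · subst hs; subst ht
      have hpt : ((0:ℂ) • a + (0:ℂ) • b) = (0:ℂ) • a := by
        funext i; simp
      rw [hpt, eval_smul_of_isHomogeneous hR]
      have h0 := hevq 0
      simp only [zero_mul, add_zero, hq0, Polynomial.eval_zero] at h0
      rw [← h0]
      simp
    · subst hs
      have hpt : ((0:ℂ) • a + t • b) = t • (fun i => b i + (0:ℂ) * a i) := by
        funext i; simp
      rw [hpt, eval_smul_of_isHomogeneous hR, ← hevp, hp0]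
      simp
  · have hpt : (s • a + t • b) = s • (fun i => a i + (t/s) * b i) := by
      funext i
      simp only [Pi.add_apply, Pi.smul_apply, smul_eq_mul]
      field_simp
    rw [hpt, eval_smul_of_isHomogeneous hR, ← hevq, hq0]
    simp

end Stmt5Aux


/-- A polynomial `Q ∈ ℂ[x_1, …, x_N]` vanishes with multiplicity at least `y` at a
point `p ∈ ℂ^N` if every iterated partial derivative of `Q` of total order at most
`y - 1` (equivalently, of total order `< y`) evaluates to `0` at `p`. -/
def VanishesToOrder {σ : Type*} (Q : MvPolynomial σ ℂ) (p : σ → ℂ) (y : ℕ) : Prop :=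
  ∀ L : List σ, L.length < y →
    MvPolynomial.eval p (L.foldr (fun i q => MvPolynomial.pderiv i q) Q) = 0

/-- If a homogeneous polynomial `Q` of degree `r` in `N` variables vanishes with
multiplicity at least `y_a` at `a ∈ ℂ^N` and with multiplicity at least `y_b` at
`b ∈ ℂ^N`, then for all scalars `s, t ∈ ℂ` it vanishes with multiplicity at least
`y_a + y_b - r` at `s • a + t • b`, i.e. at every point of the line spanned by `a`
and `b`.  (Natural subtraction makes the conclusion vacuous when `y_a + y_b ≤ r`.) -/
theorem stmt5 (N r : ℕ) (Q : MvPolynomial (Fin N) ℂ) (hQ : Q.IsHomogeneous r)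
    (a b : Fin N → ℂ) (ya yb : ℕ)
    (ha : VanishesToOrder Q a ya) (hb : VanishesToOrder Q b yb)
    (s t : ℂ) :
    VanishesToOrder Q (s • a + t • b) (ya + yb - r) := by
  intro L hL
  by_cases hk : L.length ≤ r
  · apply Stmt5Aux.key (d := r - L.length) (α := ya - L.length) (β := yb - L.length)
      _ (Stmt5Aux.isHomogeneous_foldr hQ L) a b ?_ ?_ (by omega) s t
    · intro L' hL'
      rw [← List.foldr_append]
      apply ha
      simp only [List.length_append]
      omega
    · intro L' hL'
      rw [← List.foldr_append]
      apply hb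
      simp only [List.length_append]
      omega
  · cases L with
    | nil => simp at hk
    | cons i L' =>
        simp only [List.foldr_cons]
        have hhom : (L'.foldr (fun i q => MvPolynomial.pderiv i q) Q).IsHomogeneous 0 := by
          have h1 := Stmt5Aux.isHomogeneous_foldr hQ L'
          have h2 : r - L'.length = 0 := by
            simp only [List.length_cons] at hk
            omega
          rwa [h2] at h1
        rw [Stmt5Aux.pderiv_eq_zero_of_isHomogeneous_zero hhom i, map_zero]
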